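/- If M is a noetherian gcd-monoid whose right basic elements all have S-length at most C (S the atom set), then for all a, b in M such that a ∨ b exists, the S-length of a ∨ b is at most C(ℓ_S(a) + ℓ_S(b)). -/

import Mathlib

namespace MFR

variable {M : Type*} [Monoid M]

/-- `a` left-divides `b`. -/
def LeftDvd (a b : M) : Prop := ∃ x, a * x = b

/-- `a` right-divides `b`. -/
def RightDvd (a b : M) : Prop := ∃ x, x * a = b

/-- `m` is a right lcm of `a` and `b`. -/
def IsRightLcm (a b m : M) : Prop :=
  LeftDvd a m ∧ LeftDvd b m ∧ ∀ m', LeftDvd a m' → LeftDvd b m' → LeftDvd m m'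

/-- `m` is a left lcm of `a` and `b`. -/
def IsLeftLcm (a b m : M) : Prop :=
  RightDvd a m ∧ RightDvd b m ∧ ∀ m', RightDvd a m' → RightDvd b m' → RightDvd m m'

/-- `d` is a left gcd of `a` and `b`. -/
def IsLeftGcd (a b d : M) : Prop :=
  LeftDvd d a ∧ LeftDvd d b ∧ ∀ e, LeftDvd e a → LeftDvd e b → LeftDvd e d

/-- `d` is a right gcd of `a` and `b`. -/
def IsRightGcd (a b d : M) : Prop :=
  RightDvd d a ∧ RightDvd d b ∧ ∀ e, RightDvd e a → RightDvd e b → RightDvd e d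

/-- A gcd-monoid: cancellative, no nontrivial invertible elements,
left and right gcds exist. -/
structure IsGcdMon (M : Type*) [Monoid M] : Prop where
  mul_left_cancel : ∀ a b c : M, a * b = a * c → b = c
  mul_right_cancel : ∀ a b c : M, b * a = c * a → b = c
  unit_eq_one : ∀ a : M, IsUnit a → a = 1
  exists_leftGcd : ∀ a b : M, ∃ d, IsLeftGcd a b d
  exists_rightGcd : ∀ a b : M, ∃ d, IsRightGcd a b d

/-- Proper left divisibility: `a < b`. -/
def PLDvd (a b : M) : Prop := ∃ x, ¬ IsUnit x ∧ a * x = b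

/-- Proper right divisibility. -/
def PRDvd (a b : M) : Prop := ∃ x, ¬ IsUnit x ∧ x * a = b

/-- Noetherian: proper left and right divisibility are well-founded. -/
def Noeth (M : Type*) [Monoid M] : Prop :=
  WellFounded (PLDvd (M := M)) ∧ WellFounded (PRDvd (M := M))

/-- Proper factor relation. -/
def Factor (a b : M) : Prop := ∃ x y, x * a * y = b ∧ (¬ IsUnit x ∨ ¬ IsUnit y)

/-- Atoms: not a product of two non-invertible elements. -/
def Atomic (a : M) : Prop := ¬ IsUnit a ∧ ∀ x y, a = x * y → IsUnit x ∨ IsUnit y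

/-- Existence of a common right multiple. -/
def CommonRightMul (a b : M) : Prop := ∃ m, LeftDvd a m ∧ LeftDvd b m

/-- Existence of a common left multiple. -/
def CommonLeftMul (a b : M) : Prop := ∃ m, RightDvd a m ∧ RightDvd b m

/-- The 3-Ore condition. -/
def ThreeOre (M : Type*) [Monoid M] : Prop :=
  (∀ a b c : M, CommonRightMul a b → CommonRightMul a c → CommonRightMul b c →
    ∃ m, LeftDvd a m ∧ LeftDvd b m ∧ LeftDvd c m) ∧
  (∀ a b c : M, CommonLeftMul a b → CommonLeftMul a c → CommonLeftMul b c →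
    ∃ m, RightDvd a m ∧ RightDvd b m ∧ RightDvd c m)

/-- The product of two multifractions. -/
def fprod : List M → List M → List M
  | [], b => b
  | a, [] => a
  | a, h :: t =>
    if a.length % 2 = 1 then a.dropLast ++ ((a.getLast?.getD 1) * h) :: t
    else a ++ h :: t

/-- The congruence `≃` on multifractions generated by `(1,∅)`, `(a/a,∅)`, `(1/a/a,∅)`. -/
inductive SimEq : List M → List M → Prop
  | one : SimEq [1] []
  | divPos (a : M) : SimEq [a, a] []
  | divNeg (a : M) : SimEq [1, a, a] []
  | refl (a : List M) : SimEq a a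
  | symm {a b} : SimEq a b → SimEq b a
  | trans {a b c} : SimEq a b → SimEq b c → SimEq a c
  | mul {a b c d} : SimEq a b → SimEq c d → SimEq (fprod a c) (fprod b d)

/-- The reduction rule `R_{i,x}` on multifractions (entries indexed from 1):
`Reduce i x a b` means `b = a • R_{i,x}`. -/
def Reduce (i : ℕ) (x : M) (a b : List M) : Prop :=
  (i = 1 ∧ ∃ (a₁ a₂ b₁ b₂ : M) (s : List M),
    a = a₁ :: a₂ :: s ∧ b = b₁ :: b₂ :: s ∧ b₁ * x = a₁ ∧ b₂ * x = a₂) ∨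
  (2 ≤ i ∧ i % 2 = 0 ∧ ∃ (p s : List M) (am ai ap bi bp x' : M),
    p.length = i - 2 ∧
    a = p ++ am :: ai :: ap :: s ∧
    b = p ++ (am * x') :: bi :: bp :: s ∧
    IsRightLcm x ai (x * bi) ∧ x * bi = ai * x' ∧ x * bp = ap) ∨
  (3 ≤ i ∧ i % 2 = 1 ∧ ∃ (p s : List M) (am ai ap bi bp x' : M),
    p.length = i - 2 ∧
    a = p ++ am :: ai :: ap :: s ∧
    b = p ++ (x' * am) :: bi :: bp :: s ∧
    IsLeftLcm x ai (bi * x) ∧ bi * x = x' * ai ∧ bp * x = ap)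

/-- One-step reduction. -/
def Red (a b : List M) : Prop := ∃ i x, x ≠ (1 : M) ∧ Reduce i x a b

/-- Reflexive-transitive closure of one-step reduction. -/
def RedStar : List M → List M → Prop := Relation.ReflTransGen Red

/-- Irreducible multifractions. -/
def RIrred (a : List M) : Prop := ∀ b, ¬ Red a b

/-- Right basic elements: closure of the atoms under right complement. -/
inductive RightBasic : M → Prop
  | atom {a : M} : Atomic a → RightBasic a
  | compl {a b a' : M} : RightBasic a → RightBasic b →
      IsRightLcm a b (b * a') → RightBasic a'

/-- Minimal number of atoms needed to express `a`. -/
noncomputable def atomLen (a : M) : ℕ :=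
  sInf {n | ∃ l : List M, (∀ x ∈ l, Atomic x) ∧ l.length = n ∧ l.prod = a}


section Aux

variable {M : Type*} [Monoid M]

lemma leftDvd_refl (a : M) : LeftDvd a a := ⟨1, mul_one a⟩

lemma leftDvd_trans {a b c : M} : LeftDvd a b → LeftDvd b c → LeftDvd a c := by
  rintro ⟨x, rfl⟩ ⟨y, rfl⟩; exact ⟨x * y, (mul_assoc _ _ _).symm⟩

lemma leftDvd_mul_right (a b : M) : LeftDvd a (a * b) := ⟨b, rfl⟩

lemma leftDvd_cancel (h : IsGcdMon M) {a b c : M} (hd : LeftDvd (a * b) (a * c)) : LeftDvd b c := by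
  obtain ⟨x, hx⟩ := hd
  exact ⟨x, h.mul_left_cancel a _ _ (by rw [← hx, mul_assoc])⟩

/-- Antisymmetry of left divisibility. -/
lemma leftDvd_antisymm (h : IsGcdMon M) {a b : M} (h1 : LeftDvd a b) (h2 : LeftDvd b a) : a = b := by
  obtain ⟨x, rfl⟩ := h1
  obtain ⟨y, hy⟩ := h2
  have hxy : x * y = 1 := h.mul_left_cancel a _ _ (by rw [← mul_assoc, hy, mul_one])
  have hyx : y * x = 1 := h.mul_left_cancel (a * x) _ _ (by
    rw [mul_one, ← mul_assoc, hy])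
  have : IsUnit x := ⟨⟨x, y, hxy, hyx⟩, rfl⟩
  rw [h.unit_eq_one x this, mul_one]

lemma isRightLcm_comm {a b m : M} (hm : IsRightLcm a b m) : IsRightLcm b a m :=
  ⟨hm.2.1, hm.1, fun m' h1 h2 => hm.2.2 m' h2 h1⟩

lemma isRightLcm_unique (h : IsGcdMon M) {a b m m' : M} (hm : IsRightLcm a b m)
    (hm' : IsRightLcm a b m') : m = m' :=
  leftDvd_antisymm h (hm.2.2 m' hm'.1 hm'.2.1) (hm'.2.2 m hm.1 hm.2.1)

lemma isRightLcm_one_left (b : M) : IsRightLcm 1 b b :=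
  ⟨⟨b, one_mul b⟩, leftDvd_refl b, fun _ _ h2 => h2⟩

lemma isRightLcm_one_right (a : M) : IsRightLcm a 1 a :=
  ⟨leftDvd_refl a, ⟨a, one_mul a⟩, fun _ h1 _ => h1⟩

/-- Conditional right lcm exists in a noetherian gcd-monoid. -/
lemma exists_isRightLcm (h : IsGcdMon M) (hn : Noeth M) {a b : M} (hc : CommonRightMul a b) :
    ∃ m, IsRightLcm a b m := by
  obtain ⟨c, hac, hbc⟩ := hc
  have hne : Set.Nonempty {m : M | LeftDvd a m ∧ LeftDvd b m} := ⟨c, hac, hbc⟩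
  obtain ⟨m, ⟨ham, hbm⟩, hmin⟩ := hn.1.has_min _ hne
  refine ⟨m, ham, hbm, fun m' h1 h2 => ?_⟩
  obtain ⟨d, hda, hdb, hdg⟩ := h.exists_leftGcd m m'
  have had : LeftDvd a d := hdg a ham h1
  have hbd : LeftDvd b d := hdg b hbm h2
  obtain ⟨u, hu⟩ := hda
  by_cases hun : IsUnit u
  · rw [h.unit_eq_one u hun, mul_one] at hu
    exact hu ▸ hdb
  · exact absurd ⟨u, hun, hu⟩ (hmin d ⟨had, hbd⟩)

/-- Iterated right lcm: lcm(a, y) = y·a₁, lcm(a₁, c) = c·a₂ ⟹ lcm(a, y·c) = y·c·a₂. -/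
lemma isRightLcm_iter (h : IsGcdMon M) {a y a₁ c a₂ : M} (h1 : IsRightLcm a y (y * a₁))
    (h2 : IsRightLcm a₁ c (c * a₂)) : IsRightLcm a (y * c) (y * (c * a₂)) := by
  refine ⟨?_, ?_, ?_⟩
  · -- a divides y * (c * a₂)
    have : LeftDvd (y * a₁) (y * (c * a₂)) := by
      obtain ⟨x, hx⟩ := h2.1
      exact ⟨x, by rw [mul_assoc, hx]⟩
    exact leftDvd_trans h1.1 this
  · exact ⟨a₂, by rw [mul_assoc]⟩
  · rintro m' ham' ⟨n, hn⟩
    have hym' : LeftDvd y m' := ⟨c * n, by rw [← hn, mul_assoc]⟩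
    have hlcm : LeftDvd (y * a₁) m' := h1.2.2 m' ham' hym'
    obtain ⟨s, hs⟩ := hlcm
    have ha₁ : LeftDvd a₁ (c * n) := by
      refine leftDvd_cancel h (a := y) ⟨s, ?_⟩
      rw [← mul_assoc, hs, ← hn, mul_assoc]
    have hcn : LeftDvd (c * a₂) (c * n) := h2.2.2 _ ha₁ (leftDvd_mul_right c n)
    obtain ⟨t, ht⟩ := hcn
    exact ⟨t, by rw [mul_assoc, ht, ← mul_assoc, hn]⟩

/-- Every non-unit has an atomic left divisor. -/
lemma exists_atom_leftDvd (h : IsGcdMon M) (hn : Noeth M) {a : M} (ha : ¬ IsUnit a) :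
    ∃ p, Atomic p ∧ LeftDvd p a := by
  have hne : Set.Nonempty {p : M | ¬ IsUnit p ∧ LeftDvd p a} := ⟨a, ha, leftDvd_refl a⟩
  obtain ⟨p, ⟨hpu, hpa⟩, hmin⟩ := hn.1.has_min _ hne
  refine ⟨p, ⟨hpu, fun x y hxy => ?_⟩, hpa⟩
  by_contra hcon
  push_neg at hcon
  obtain ⟨hx, hy⟩ := hcon
  have hxa : LeftDvd x a := leftDvd_trans ⟨y, hxy.symm⟩ hpa
  exact hmin x ⟨hx, hxa⟩ ⟨y, hy, hxy.symm⟩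

/-- Every element is a product of atoms (noetherian). -/
lemma exists_atom_list (h : IsGcdMon M) (hn : Noeth M) (a : M) :
    ∃ l : List M, (∀ x ∈ l, Atomic x) ∧ l.prod = a := by
  induction a using WellFounded.induction hn.2 with
  | _ a ih =>
    by_cases hu : IsUnit a
    · exact ⟨[], by simp, by simp [h.unit_eq_one a hu]⟩
    · obtain ⟨p, hp, c, hc⟩ := exists_atom_leftDvd h hn hu
      obtain ⟨l, hl, hlp⟩ := ih c ⟨p, hp.1, hc⟩
      refine ⟨p :: l, fun x hx => ?_, by rw [List.prod_cons, hlp, hc]⟩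
      rcases List.mem_cons.1 hx with rfl | hx
      exacts [hp, hl x hx]

lemma atomLen_set_nonempty (h : IsGcdMon M) (hn : Noeth M) (a : M) :
    {n | ∃ l : List M, (∀ x ∈ l, Atomic x) ∧ l.length = n ∧ l.prod = a}.Nonempty := by
  obtain ⟨l, hl, hlp⟩ := exists_atom_list h hn a
  exact ⟨l.length, l, hl, rfl, hlp⟩

lemma atomLen_le {a : M} {l : List M} (hl : ∀ x ∈ l, Atomic x) (hlp : l.prod = a) :
    atomLen a ≤ l.length :=
  Nat.sInf_le ⟨l, hl, rfl, hlp⟩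

lemma exists_min_atom_list (h : IsGcdMon M) (hn : Noeth M) (a : M) :
    ∃ l : List M, (∀ x ∈ l, Atomic x) ∧ l.length = atomLen a ∧ l.prod = a :=
  Nat.sInf_mem (atomLen_set_nonempty h hn a)

lemma atomLen_mul_le (h : IsGcdMon M) (hn : Noeth M) (a b : M) :
    atomLen (a * b) ≤ atomLen a + atomLen b := by
  obtain ⟨la, hla, hlal, hlap⟩ := exists_min_atom_list h hn a
  obtain ⟨lb, hlb, hlbl, hlbp⟩ := exists_min_atom_list h hn b
  have := atomLen_le (a := a * b) (l := la ++ lb)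
    (fun x hx => (List.mem_append.1 hx).elim (hla x) (hlb x))
    (by rw [List.prod_append, hlap, hlbp])
  simpa [hlal, hlbl] using this

/-- Key lemma for basic elements: complement of a basic along a basic is basic. -/
lemma basic_compl {a y m : M} (ha : RightBasic a) (hy : RightBasic y)
    (hm : IsRightLcm a y m) :
    ∃ a₁ y', RightBasic a₁ ∧ RightBasic y' ∧ m = y * a₁ ∧ m = a * y' := by
  obtain ⟨a₁, ha₁⟩ := hm.2.1
  obtain ⟨y', hy'⟩ := hm.1
  refine ⟨a₁, y', ?_, ?_, ha₁.symm, hy'.symm⟩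
  · exact RightBasic.compl ha hy (ha₁ ▸ hm)
  · exact RightBasic.compl hy ha (hy' ▸ isRightLcm_comm hm)

/-- Complement of one basic element along a product of basics. -/
lemma basic_compl_list (h : IsGcdMon M) (hn : Noeth M) (t : List M) :
    ∀ (a m : M), (∀ x ∈ t, RightBasic x) → RightBasic a →
    IsRightLcm a t.prod m →
    ∃ (a' : M) (t' : List M), RightBasic a' ∧ (∀ x ∈ t', RightBasic x) ∧
      t'.length = t.length ∧ m = t.prod * a' ∧ m = a * t'.prod := by
  induction t with
  | nil =>
    intro a m _ ha hm
    have : m = a := isRightLcm_unique h hm (by simpa using isRightLcm_one_right a)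
    exact ⟨a, [], ha, by simp, rfl, by simp [this], by simp [this]⟩
  | cons y t ih =>
    intro a m hbt ha hm
    have hy : RightBasic y := hbt y List.mem_cons_self
    have hbt' : ∀ x ∈ t, RightBasic x := fun x hx => hbt x (List.mem_cons_of_mem y hx)
    rw [List.prod_cons] at hm
    -- lcm of a and y exists
    have hym : LeftDvd y m := leftDvd_trans (leftDvd_mul_right y t.prod) hm.2.1
    obtain ⟨m₁, hm₁⟩ := exists_isRightLcm h hn ⟨m, hm.1, hym⟩
    obtain ⟨a₁, y', ha₁, hy', hmya, hmay⟩ := basic_compl ha hy hm₁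
    -- lcm of a₁ and t.prod exists
    have hm₁m : LeftDvd m₁ m := hm₁.2.2 m hm.1 hym
    obtain ⟨mr, hmr⟩ := hym
    have ha₁mr : LeftDvd a₁ mr := by
      refine leftDvd_cancel h (a := y) ?_
      rw [← hmya, hmr]; exact hm₁m
    have htmr : LeftDvd t.prod mr := by
      refine leftDvd_cancel h (a := y) ?_
      rw [hmr]; exact hm.2.1
    obtain ⟨m₂, hm₂⟩ := exists_isRightLcm h hn ⟨mr, ha₁mr, htmr⟩
    obtain ⟨a₂, t', ha₂, ht', htl, hm₂t, hm₂a⟩ := ih a₁ m₂ hbt' ha₁ hm₂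
    -- iterated lcm
    have hiter : IsRightLcm a (y * t.prod) (y * (t.prod * a₂)) :=
      isRightLcm_iter h (hmya ▸ hm₁) (hm₂t ▸ hm₂)
    have hmeq : m = y * (t.prod * a₂) := isRightLcm_unique h hm hiter
    refine ⟨a₂, y' :: t', ha₂, ?_, by simp [htl], ?_, ?_⟩
    · intro x hx
      rcases List.mem_cons.1 hx with rfl | hx
      exacts [hy', ht' x hx]
    · rw [List.prod_cons, hmeq, mul_assoc]
    · rw [List.prod_cons, hmeq, ← hm₂t, hm₂a, ← mul_assoc, ← hmya, hmay, mul_assoc]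

/-- Key fact: the complement of a product of basics along a product of basics
is a product of the same number of basics. -/
lemma basic_compl_lists (h : IsGcdMon M) (hn : Noeth M) (la : List M) :
    ∀ (lb : List M) (m : M), (∀ x ∈ la, RightBasic x) → (∀ x ∈ lb, RightBasic x) →
    IsRightLcm la.prod lb.prod m →
    ∃ lb' : List M, (∀ x ∈ lb', RightBasic x) ∧ lb'.length = lb.length ∧
      m = la.prod * lb'.prod := by
  induction la with
  | nil =>
    intro lb m _ hlb hm
    have : m = lb.prod := isRightLcm_unique h hm (by simpa using isRightLcm_one_left lb.prod)
    exact ⟨lb, hlb, rfl, by simp [this]⟩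
  | cons x t ih =>
    intro lb m hla hlb hm
    have hx : RightBasic x := hla x List.mem_cons_self
    have hla' : ∀ z ∈ t, RightBasic z := fun z hz => hla z (List.mem_cons_of_mem x hz)
    rw [List.prod_cons] at hm
    -- lcm of x and lb.prod exists
    have hxm : LeftDvd x m := leftDvd_trans (leftDvd_mul_right x t.prod) hm.1
    obtain ⟨m₁, hm₁⟩ := exists_isRightLcm h hn ⟨m, hxm, hm.2.1⟩
    obtain ⟨x₁, lb'', hx₁, hlb'', hlb''l, hm₁b, hm₁x⟩ :=
      basic_compl_list h hn lb x m₁ hlb hx hm₁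
    -- lcm of lb''.prod and t.prod exists
    have hm₁m : LeftDvd m₁ m := hm₁.2.2 m hxm hm.2.1
    obtain ⟨mr, hmr⟩ := hxm
    have hbmr : LeftDvd lb''.prod mr := by
      refine leftDvd_cancel h (a := x) ?_
      rw [← hm₁x, hmr]; exact hm₁m
    have htmr : LeftDvd t.prod mr := by
      refine leftDvd_cancel h (a := x) ?_
      rw [hmr]; exact hm.1
    obtain ⟨m₂, hm₂⟩ := exists_isRightLcm h hn ⟨mr, htmr, hbmr⟩
    obtain ⟨lb''', hlb''', hlb'''l, hm₂e⟩ := ih lb'' m₂ hla' hlb'' hm₂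
    -- iterated lcm: lcm(b, x·t.prod) = x·(t.prod·lb'''.prod)
    have h1 : IsRightLcm lb.prod x (x * lb''.prod) := by
      rw [← hm₁x]; exact isRightLcm_comm hm₁
    have h2 : IsRightLcm lb''.prod t.prod (t.prod * lb'''.prod) := by
      rw [← hm₂e]; exact isRightLcm_comm hm₂
    have hiter : IsRightLcm lb.prod (x * t.prod) (x * (t.prod * lb'''.prod)) :=
      isRightLcm_iter h h1 h2
    have hmeq : m = x * (t.prod * lb'''.prod) :=
      isRightLcm_unique h hm (isRightLcm_comm hiter)
    exact ⟨lb''', hlb''', by rw [hlb'''l, hlb''l],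
      by rw [List.prod_cons, hmeq, mul_assoc]⟩

lemma atomLen_basic_prod (h : IsGcdMon M) (hn : Noeth M) (C : ℕ)
    (hC : ∀ x : M, RightBasic x → atomLen x ≤ C) (l : List M)
    (hl : ∀ x ∈ l, RightBasic x) : atomLen l.prod ≤ C * l.length := by
  induction l with
  | nil =>
    have : atomLen (1 : M) ≤ 0 := atomLen_le (l := []) (by simp) (by simp)
    simpa using this
  | cons x t ih =>
    have h1 : atomLen (x * t.prod) ≤ atomLen x + atomLen t.prod :=
      atomLen_mul_le h hn x t.prod
    have h2 : atomLen x ≤ C := hC x (hl x List.mem_cons_self)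
    have h3 := ih (fun z hz => hl z (List.mem_cons_of_mem x hz))
    rw [List.prod_cons]
    calc atomLen (x * t.prod) ≤ C + C * t.length := by omega
    _ = C * (t.length + 1) := by ring
    _ = C * (x :: t).length := by simp

end Aux

/-- if every right basic element has atom-length at most `C`,
then `ℓ(a ∨ b) ≤ C(ℓ(a) + ℓ(b))`. -/
theorem stmt_17 {M : Type*} [Monoid M] (h : IsGcdMon M) (hn : Noeth M)
    (C : ℕ) (hC : ∀ x : M, RightBasic x → atomLen x ≤ C)
    (a b m : M) (hm : IsRightLcm a b m) :
    atomLen m ≤ C * (atomLen a + atomLen b) := by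
  obtain ⟨la, hla, hlal, hlap⟩ := exists_min_atom_list h hn a
  obtain ⟨lb, hlb, hlbl, hlbp⟩ := exists_min_atom_list h hn b
  have hlab : ∀ x ∈ la, RightBasic x := fun x hx => RightBasic.atom (hla x hx)
  have hlbb : ∀ x ∈ lb, RightBasic x := fun x hx => RightBasic.atom (hlb x hx)
  obtain ⟨lb', hlb', hlb'l, hmeq⟩ := basic_compl_lists h hn la lb m hlab hlbb
    (by rw [hlap, hlbp]; exact hm)
  have hfin : atomLen m ≤ C * (la ++ lb').length := by
    rw [hmeq, ← List.prod_append]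
    exact atomLen_basic_prod h hn C hC _
      (fun x hx => (List.mem_append.1 hx).elim (hlab x) (hlb' x))
  simpa [List.length_append, hlal, hlb'l, hlbl] using hfin

end MFR
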